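/- Let (X, ℬ, μ) be a probability space, T : X → X a measure-preserving transformation, and f ∈ L¹(μ) with f ≥ 0 a.e. Then limsup_{k→∞} A_k f (a priori with values in [0, ∞]) is integrable, and ∫ (limsup_{k→∞} A_k f) dμ ≤ ∫ f dμ. -/

import Mathlib

open MeasureTheory Filter

open scoped ENNReal NNReal

private theorem birkhoff_limsup_key {X : Type*} [MeasurableSpace X] (μ : Measure X)
    [IsProbabilityMeasure μ] (T : X → X) (hT : MeasurePreserving T μ μ)
    (f : X → ℝ) (hfm : Measurable f) (hf : Integrable f μ) (hf_nonneg : 0 ≤ᵐ[μ] f) :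
    ∫⁻ x, limsup (fun k => ENNReal.ofReal (birkhoffAverage ℝ T f k x)) atTop ∂μ
      ≤ ENNReal.ofReal (∫ x, f x ∂μ) := by
  have hTm : Measurable T := hT.measurable
  have hiter : ∀ j : ℕ, Measurable (T^[j]) := fun j => hTm.iterate j
  have hBS : ∀ k : ℕ, Measurable (fun x => birkhoffSum T f k x) := by
    intro k
    unfold birkhoffSum
    exact Finset.measurable_sum _ (fun i _ => hfm.comp (hiter i))
  have hBA : ∀ k : ℕ, Measurable (fun x => birkhoffAverage ℝ T f k x) := by
    intro k
    unfold birkhoffAverage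
    exact (hBS k).const_smul ((k : ℝ)⁻¹)
  set g : X → ℝ≥0∞ := fun x => limsup (fun k => ENNReal.ofReal (birkhoffAverage ℝ T f k x)) atTop
    with hg_def
  have hg : Measurable g := Measurable.limsup (fun k => ENNReal.measurable_ofReal.comp (hBA k))
  set S : Set X := ⋂ j : ℕ, T^[j] ⁻¹' {y | 0 ≤ f y} with hS_def
  have hSmem : ∀ x, x ∈ S ↔ ∀ j : ℕ, 0 ≤ f (T^[j] x) := by
    intro x; simp [hS_def]
  have hSfull : μ Sᶜ = 0 := by
    rw [hS_def, Set.compl_iInter]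
    refine measure_iUnion_null fun j => ?_
    rw [← Set.preimage_compl]
    rw [(hT.iterate j).measure_preimage]
    · exact hf_nonneg
    · exact (measurableSet_le measurable_const hfm).compl.nullMeasurableSet
  have haeS : ∀ᵐ x ∂μ, x ∈ S := by
    rw [MeasureTheory.ae_iff]
    exact hSfull
  have hiterS : ∀ x ∈ S, ∀ j : ℕ, T^[j] x ∈ S := by
    intro x hx j
    rw [hSmem] at hx ⊢
    intro i
    rw [← Function.iterate_add_apply]
    exact hx (i + j)
  have hBSnonneg : ∀ x ∈ S, ∀ k : ℕ, 0 ≤ birkhoffSum T f k x := by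
    intro x hx k
    refine Finset.sum_nonneg fun i _ => (hSmem x).1 hx i
  have hBAnonneg : ∀ x ∈ S, ∀ k : ℕ, 0 ≤ birkhoffAverage ℝ T f k x := by
    intro x hx k
    unfold birkhoffAverage
    exact smul_nonneg (by positivity) (hBSnonneg x hx k)
  -- monotonicity of g along orbits
  have hg_mono : ∀ x ∈ S, g x ≤ g (T x) := by
    intro x hx
    by_cases hA : g (T x) = ⊤
    · simp [hA]
    refine ENNReal.le_of_forall_pos_le_add ?_
    intro ε hε hlt
    have hTxS : T x ∈ S := by
      have := hiterS x hx 1; simpa using this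
    set ε' : ℝ := (ε : ℝ) / 2 with hε'
    have hε'pos : 0 < ε' := by positivity
    -- pointwise bound
    have h1 : ∀ k : ℕ, birkhoffAverage ℝ T f (k + 1) x
        ≤ f x / (k + 1) + birkhoffAverage ℝ T f k (T x) := by
      intro k
      have hsum : birkhoffSum T f (k + 1) x = f x + birkhoffSum T f k (T x) :=
        birkhoffSum_succ' T f k x
      have hk1 : (0 : ℝ) < (k : ℝ) + 1 := by positivity
      unfold birkhoffAverage
      rw [smul_eq_mul, smul_eq_mul, hsum]
      push_cast
      rw [mul_add]
      have h2 : ((k : ℝ) + 1)⁻¹ * birkhoffSum T f k (T x)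
          ≤ (k : ℝ)⁻¹ * birkhoffSum T f k (T x) := by
        rcases Nat.eq_zero_or_pos k with hk | hk
        · subst hk; simp [birkhoffSum]
        · apply mul_le_mul_of_nonneg_right _ (hBSnonneg _ hTxS k)
          have hk' : (0:ℝ) < (k:ℝ) := by exact_mod_cast hk
          exact inv_anti₀ hk' (by linarith)
      have h3 : ((k : ℝ) + 1)⁻¹ * f x = f x / ((k : ℝ) + 1) := by ring
      nlinarith [h2, h3]
    have h2 : Tendsto (fun k : ℕ => f x / ((k : ℝ) + 1)) atTop (nhds 0) := by
      have := tendsto_const_div_atTop_nhds_zero_nat (f x)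
      have h' := this.comp (tendsto_add_atTop_nat 1)
      refine h'.congr fun k => ?_
      simp only [Function.comp_apply]
      push_cast
      ring
    have hev1 : ∀ᶠ k : ℕ in atTop, f x / ((k : ℝ) + 1) < ε' :=
      h2.eventually_lt_const hε'pos
    have hlt' : g (T x) < g (T x) + ENNReal.ofReal ε' :=
      ENNReal.lt_add_right hA (by simp [ENNReal.ofReal_pos, hε'pos])
    have hev2 : ∀ᶠ k : ℕ in atTop,
        ENNReal.ofReal (birkhoffAverage ℝ T f k (T x)) < g (T x) + ENNReal.ofReal ε' :=
      eventually_lt_of_limsup_lt hlt'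
    have hev : ∀ᶠ k : ℕ in atTop,
        ENNReal.ofReal (birkhoffAverage ℝ T f (k + 1) x)
          ≤ g (T x) + ENNReal.ofReal ε' + ENNReal.ofReal ε' := by
      filter_upwards [hev1, hev2] with k hk1 hk2
      calc ENNReal.ofReal (birkhoffAverage ℝ T f (k + 1) x)
          ≤ ENNReal.ofReal (f x / ((k : ℝ) + 1) + birkhoffAverage ℝ T f k (T x)) :=
            ENNReal.ofReal_le_ofReal (h1 k)
        _ ≤ ENNReal.ofReal (f x / ((k : ℝ) + 1))
            + ENNReal.ofReal (birkhoffAverage ℝ T f k (T x)) := ENNReal.ofReal_add_le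
        _ ≤ ENNReal.ofReal ε' + (g (T x) + ENNReal.ofReal ε') := by
            gcongr <;> exact ENNReal.ofReal_le_ofReal hk1.le
        _ = g (T x) + ENNReal.ofReal ε' + ENNReal.ofReal ε' := by ring
    have hshift : g x = limsup (fun k : ℕ =>
        ENNReal.ofReal (birkhoffAverage ℝ T f (k + 1) x)) atTop := by
      rw [hg_def]
      exact (limsup_nat_add (fun k => ENNReal.ofReal (birkhoffAverage ℝ T f k x)) 1).symm
    rw [hshift]
    calc limsup (fun k : ℕ => ENNReal.ofReal (birkhoffAverage ℝ T f (k + 1) x)) atTop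
        ≤ g (T x) + ENNReal.ofReal ε' + ENNReal.ofReal ε' := limsup_le_of_le (by isBoundedDefault) hev
      _ = g (T x) + ε := by
          rw [add_assoc, ← ENNReal.ofReal_add hε'pos.le hε'pos.le]
          congr 1
          have h5 : ε' + ε' = (ε : ℝ) := by rw [hε']; ring
          rw [h5, ENNReal.ofReal_coe_nnreal]
  have hg_orbit : ∀ x ∈ S, ∀ j : ℕ, g x ≤ g (T^[j] x) := by
    intro x hx j
    induction j with
    | zero => simp
    | succ j ih =>
      calc g x ≤ g (T^[j] x) := ih
        _ ≤ g (T (T^[j] x)) := hg_mono _ (hiterS x hx j)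
        _ = g (T^[j+1] x) := by rw [Function.iterate_succ_apply']
  -- main per-truncation bound
  have main : ∀ n : ℕ, ∫⁻ x, min (g x) (n : ℝ≥0∞) ∂μ ≤ ENNReal.ofReal (∫ x, f x ∂μ) := by
    intro n
    set φ : X → ℝ := fun x => (min (g x) (n : ℝ≥0∞)).toReal with hφ_def
    have hmin_ne_top : ∀ x, min (g x) (n : ℝ≥0∞) ≠ ⊤ :=
      fun x => ne_top_of_le_ne_top (ENNReal.natCast_ne_top n) (min_le_right _ _)
    have hφmeas : Measurable φ := (hg.min measurable_const).ennreal_toReal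
    have hφnonneg : ∀ x, 0 ≤ φ x := fun x => ENNReal.toReal_nonneg
    have hφle : ∀ x, φ x ≤ (n : ℝ) := by
      intro x
      have h1 : (min (g x) (n : ℝ≥0∞)).toReal ≤ ((n : ℝ≥0∞)).toReal :=
        ENNReal.toReal_mono (ENNReal.natCast_ne_top n) (min_le_right _ _)
      simpa using h1
    have hφ_int : Integrable φ μ := by
      refine (integrable_const (n : ℝ)).mono' hφmeas.aestronglyMeasurable ?_
      refine Filter.Eventually.of_forall fun x => ?_
      rw [Real.norm_eq_abs, abs_of_nonneg (hφnonneg x)]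
      exact hφle x
    have hφ_orbit : ∀ x ∈ S, ∀ j : ℕ, φ x ≤ φ (T^[j] x) := by
      intro x hx j
      exact ENNReal.toReal_mono (hmin_ne_top _) (min_le_min (hg_orbit x hx j) le_rfl)
    -- per ε bound
    have main2 : ∀ ε : ℝ, 0 < ε → ∫ x, φ x ∂μ ≤ ∫ x, f x ∂μ + ε := by
      intro ε hε
      set m : X → ℝ := fun x => max (φ x - ε) 0 with hm_def
      have hm_meas : Measurable m := (hφmeas.sub measurable_const).max measurable_const
      have hm_nonneg : ∀ x, 0 ≤ m x := fun x => le_max_right _ _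
      have hm_le_n : ∀ x, m x ≤ (n : ℝ) := by
        intro x
        refine max_le (by linarith [hφle x]) (by positivity)
      have hm_int : Integrable m μ := by
        refine (integrable_const (n : ℝ)).mono' hm_meas.aestronglyMeasurable ?_
        refine Filter.Eventually.of_forall fun x => ?_
        rw [Real.norm_eq_abs, abs_of_nonneg (hm_nonneg x)]
        exact hm_le_n x
      have hm_orbit : ∀ x ∈ S, ∀ j : ℕ, m x ≤ m (T^[j] x) := by
        intro x hx j
        exact max_le_max (by linarith [hφ_orbit x hx j]) le_rfl
      set E : ℕ → Set X :=
        fun N => ⋃ k ∈ Finset.Icc 1 N, {x | (k : ℝ) * m x ≤ birkhoffSum T f k x} with hE_def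
      have hE_meas : ∀ N, MeasurableSet (E N) := by
        intro N
        refine Finset.measurableSet_biUnion _ fun k _ => ?_
        exact measurableSet_le (hm_meas.const_mul _) (hBS k)
      have hE_mono : Monotone E := by
        intro N N' hNN' x hx
        simp only [hE_def, Set.mem_iUnion] at hx ⊢
        obtain ⟨k, hk, hxk⟩ := hx
        rw [Finset.mem_Icc] at hk
        exact ⟨k, Finset.mem_Icc.mpr ⟨hk.1, hk.2.trans hNN'⟩, hxk⟩
      have hcover : ∀ x ∈ S, ∃ N, x ∈ E N := by
        intro x hx
        rcases eq_or_lt_of_le (hm_nonneg x) with hm0 | hmpos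
        · refine ⟨1, ?_⟩
          simp only [hE_def, Set.mem_iUnion]
          refine ⟨1, Finset.mem_Icc.mpr ⟨le_rfl, le_rfl⟩, ?_⟩
          simp only [Set.mem_setOf_eq, Nat.cast_one, one_mul, ← hm0]
          have := (hSmem x).1 hx 0
          simpa [birkhoffSum] using this
        · -- m x > 0, so φ x - ε = m x > 0
          have hφε : 0 < φ x - ε := by
            by_contra h
            push_neg at h
            have : m x = 0 := max_eq_right h
            rw [this] at hmpos; exact lt_irrefl 0 hmpos
          have hmx : m x = φ x - ε := max_eq_left hφε.le
          have hofφ : ENNReal.ofReal (φ x) = min (g x) (n : ℝ≥0∞) :=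
            ENNReal.ofReal_toReal (hmin_ne_top x)
          have hlt : ENNReal.ofReal (m x) < g x := by
            calc ENNReal.ofReal (m x) < ENNReal.ofReal (φ x) := by
                  rw [ENNReal.ofReal_lt_ofReal_iff (by linarith)]
                  rw [hmx]; linarith
              _ = min (g x) (n : ℝ≥0∞) := hofφ
              _ ≤ g x := min_le_left _ _
          have hfreq : ∃ᶠ k : ℕ in atTop,
              ENNReal.ofReal (m x) < ENNReal.ofReal (birkhoffAverage ℝ T f k x) :=
            frequently_lt_of_lt_limsup (by isBoundedDefault) hlt
          obtain ⟨k, hk1, hklt⟩ :=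
            (hfreq.and_eventually (eventually_ge_atTop 1)).exists
          refine ⟨k, ?_⟩
          simp only [hE_def, Set.mem_iUnion]
          refine ⟨k, Finset.mem_Icc.mpr ⟨hklt, le_rfl⟩, ?_⟩
          have hmlt : m x < birkhoffAverage ℝ T f k x := by
            rw [ENNReal.ofReal_lt_ofReal_iff_of_nonneg (hm_nonneg x)] at hk1
            exact hk1
          simp only [Set.mem_setOf_eq]
          have hkpos : (0 : ℝ) < (k : ℝ) := by exact_mod_cast hklt
          have : (k : ℝ) * birkhoffAverage ℝ T f k x = birkhoffSum T f k x := by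
            unfold birkhoffAverage
            rw [smul_eq_mul]
            field_simp
          calc (k : ℝ) * m x ≤ (k : ℝ) * birkhoffAverage ℝ T f k x := by
                exact mul_le_mul_of_nonneg_left hmlt.le hkpos.le
            _ = birkhoffSum T f k x := this
      have hμE : Tendsto (fun N => μ ((E N)ᶜ)) atTop (nhds 0) := by
        have hsub : (⋂ N, (E N)ᶜ) ⊆ Sᶜ := by
          intro x hx
          simp only [Set.mem_iInter, Set.mem_compl_iff] at hx
          intro hxS
          obtain ⟨N, hN⟩ := hcover x hxS
          exact hx N hN
        have h0 : μ (⋂ N, (E N)ᶜ) = 0 := measure_mono_null hsub hSfull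
        have := tendsto_measure_iInter_atTop
          (μ := μ) (s := fun N => (E N)ᶜ)
          (fun N => (hE_meas N).compl.nullMeasurableSet)
          (fun a b hab => Set.compl_subset_compl.mpr (hE_mono hab))
          ⟨0, measure_ne_top μ _⟩
        rw [h0] at this
        exact this
      -- per N bound
      have hNbound : ∀ N : ℕ,
          ∫ x, m x ∂μ ≤ ∫ x, f x ∂μ + (μ ((E N)ᶜ)).toReal * (n : ℝ) := by
        intro N
        set F : X → ℝ := fun x => f x + Set.indicator ((E N)ᶜ) (fun _ => (n : ℝ)) x with hF_def
        have hF_meas : Measurable F :=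
          hfm.add (measurable_const.indicator (hE_meas N).compl)
        have hF_int : Integrable F μ :=
          hf.add ((integrable_const _).indicator (hE_meas N).compl)
        have hfF : ∀ x, f x ≤ F x := by
          intro x
          exact le_add_of_nonneg_right (Set.indicator_nonneg (fun _ _ => by positivity) x)
        have hF_nonneg : ∀ x ∈ S, ∀ j : ℕ, 0 ≤ F (T^[j] x) := by
          intro x hx j
          exact le_trans ((hSmem x).1 hx j) (hfF _)
        have hBSF_nonneg : ∀ x ∈ S, ∀ (j L : ℕ), 0 ≤ birkhoffSum T F L (T^[j] x) := by
          intro x hx j L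
          refine Finset.sum_nonneg fun i _ => ?_
          rw [← Function.iterate_add_apply]
          exact hF_nonneg x hx (i + j)
        have hgood : ∀ y ∈ S, ∃ k, 1 ≤ k ∧ k ≤ N + 1 ∧
            (k : ℝ) * m y ≤ birkhoffSum T F k y := by
          intro y hy
          by_cases hyE : y ∈ E N
          · simp only [hE_def, Set.mem_iUnion] at hyE
            obtain ⟨k, hk, hyk⟩ := hyE
            rw [Finset.mem_Icc] at hk
            refine ⟨k, hk.1, hk.2.trans (Nat.le_succ N), ?_⟩
            refine le_trans hyk ?_
            exact Finset.sum_le_sum fun i _ => hfF _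
          · refine ⟨1, le_rfl, by omega, ?_⟩
            have h1 : birkhoffSum T F 1 y = F y := by simp [birkhoffSum]
            have hFy : F y = f y + (n : ℝ) := by
              have hind : Set.indicator ((E N)ᶜ) (fun _ => (n : ℝ)) y = (n : ℝ) :=
                Set.indicator_of_mem (show y ∈ (E N)ᶜ from hyE) (fun _ => (n : ℝ))
              rw [hF_def]
              simp only
              rw [hind]
            have hy0 : 0 ≤ f y := by simpa using (hSmem y).1 hy 0
            rw [h1, Nat.cast_one, one_mul, hFy]
            have := hm_le_n y
            linarith
        -- the key induction
        have hkey : ∀ x ∈ S, ∀ L j : ℕ,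
            ((L : ℝ) - (N + 1)) * m x ≤ birkhoffSum T F L (T^[j] x) := by
          intro x hx L
          induction L using Nat.strong_induction_on with
          | _ L IH =>
            intro j
            by_cases hL : L ≤ N + 1
            · refine le_trans ?_ (hBSF_nonneg x hx j L)
              have h1 : (L : ℝ) - (N + 1) ≤ 0 := by
                have : (L : ℝ) ≤ (N : ℝ) + 1 := by exact_mod_cast hL
                linarith
              calc ((L : ℝ) - (N + 1)) * m x ≤ 0 * m x :=
                    mul_le_mul_of_nonneg_right h1 (hm_nonneg x)
                _ = 0 := by ring
            · push_neg at hL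
              have hy : T^[j] x ∈ S := hiterS x hx j
              obtain ⟨k, hk1, hkN, hky⟩ := hgood (T^[j] x) hy
              have hkL : k ≤ L := by omega
              have hsplit : birkhoffSum T F L (T^[j] x)
                  = birkhoffSum T F k (T^[j] x) + birkhoffSum T F (L - k) (T^[k+j] x) := by
                have h1 := birkhoffSum_add T F k (L - k) (T^[j] x)
                rw [Nat.add_sub_cancel' hkL] at h1
                rw [h1, Function.iterate_add_apply]
              have hIH := IH (L - k) (by omega) (k + j)
              have hmxy : m x ≤ m (T^[j] x) := hm_orbit x hx j
              have hcast : ((L - k : ℕ) : ℝ) = (L : ℝ) - (k : ℝ) := by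
                rw [Nat.cast_sub hkL]
              calc ((L : ℝ) - (N + 1)) * m x
                  = (k : ℝ) * m x + (((L - k : ℕ) : ℝ) - (N + 1)) * m x := by
                    rw [hcast]; ring
                _ ≤ (k : ℝ) * m (T^[j] x) + birkhoffSum T F (L - k) (T^[k+j] x) := by
                    refine add_le_add ?_ hIH
                    exact mul_le_mul_of_nonneg_left hmxy (by positivity)
                _ ≤ birkhoffSum T F k (T^[j] x) + birkhoffSum T F (L - k) (T^[k+j] x) := by
                    exact add_le_add_left hky _
                _ = birkhoffSum T F L (T^[j] x) := hsplit.symm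
        -- integration facts
        have hcomp_int : ∀ i : ℕ, Integrable (fun x => F (T^[i] x)) μ :=
          fun i => ((hT.iterate i).integrable_comp hF_meas.aestronglyMeasurable).mpr hF_int
        have hcomp_eq : ∀ i : ℕ, ∫ x, F (T^[i] x) ∂μ = ∫ x, F x ∂μ := by
          intro i
          conv_rhs => rw [← (hT.iterate i).map_eq]
          rw [integral_map (hT.iterate i).measurable.aemeasurable]
          rw [(hT.iterate i).map_eq]
          exact hF_meas.aestronglyMeasurable
        have hBSF_int : ∀ L : ℕ, Integrable (fun x => birkhoffSum T F L x) μ := by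
          intro L
          unfold birkhoffSum
          exact integrable_finset_sum _ fun i _ => hcomp_int i
        have hBSF_integral : ∀ L : ℕ, ∫ x, birkhoffSum T F L x ∂μ = (L : ℝ) * ∫ x, F x ∂μ := by
          intro L
          unfold birkhoffSum
          rw [integral_finset_sum _ fun i _ => hcomp_int i]
          rw [Finset.sum_congr rfl fun i _ => hcomp_eq i]
          simp [Finset.sum_const]
        have hL : ∀ L : ℕ, ((L : ℝ) - (N + 1)) * ∫ x, m x ∂μ ≤ (L : ℝ) * ∫ x, F x ∂μ := by
          intro L
          have hae : ∀ᵐ x ∂μ, ((L : ℝ) - (N + 1)) * m x ≤ birkhoffSum T F L x := by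
            filter_upwards [haeS] with x hx
            have := hkey x hx L 0
            simpa using this
          calc ((L : ℝ) - (N + 1)) * ∫ x, m x ∂μ
              = ∫ x, ((L : ℝ) - (N + 1)) * m x ∂μ := (integral_const_mul _ _).symm
            _ ≤ ∫ x, birkhoffSum T F L x ∂μ :=
                integral_mono_ae (hm_int.const_mul _) (hBSF_int L) hae
            _ = (L : ℝ) * ∫ x, F x ∂μ := hBSF_integral L
        have hI0 : 0 ≤ ∫ x, m x ∂μ := integral_nonneg hm_nonneg
        have hIC : ∫ x, m x ∂μ ≤ ∫ x, F x ∂μ := by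
          set I := ∫ x, m x ∂μ
          set C := ∫ x, F x ∂μ
          have h3 : ∀ L : ℕ, 1 ≤ L → (((L : ℝ) - (N + 1)) / L) * I ≤ C := by
            intro L hL1
            have hLpos : (0 : ℝ) < (L : ℝ) := by exact_mod_cast hL1
            rw [div_mul_eq_mul_div, div_le_iff₀ hLpos]
            calc ((L : ℝ) - (N + 1)) * I ≤ (L : ℝ) * C := hL L
              _ = C * (L : ℝ) := by ring
          have h4 : Tendsto (fun L : ℕ => (((L : ℝ) - (N + 1)) / L) * I) atTop (nhds I) := by
            have hbase : Tendsto (fun L : ℕ => (1 - ((N : ℝ) + 1) / L) * I) atTop (nhds I) := by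
              have h1 := tendsto_const_div_atTop_nhds_zero_nat ((N : ℝ) + 1)
              have h2 := (tendsto_const_nhds (x := (1 : ℝ)) (f := atTop (α := ℕ))).sub h1
              have h3' := h2.mul (tendsto_const_nhds (x := I) (f := atTop (α := ℕ)))
              simpa using h3'
            refine hbase.congr' ?_
            filter_upwards [eventually_ge_atTop 1] with L hL1
            have hLne : (L : ℝ) ≠ 0 := by
              have : (0 : ℝ) < (L : ℝ) := by exact_mod_cast hL1
              linarith
            field_simp
          exact le_of_tendsto h4 (eventually_atTop.mpr ⟨1, h3⟩)
        have hFval : ∫ x, F x ∂μ = ∫ x, f x ∂μ + (μ ((E N)ᶜ)).toReal * (n : ℝ) := by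
          rw [hF_def]
          rw [integral_add hf ((integrable_const _).indicator (hE_meas N).compl)]
          congr 1
          rw [integral_indicator_const _ (hE_meas N).compl]
          simp [smul_eq_mul]
          exact Or.inl rfl
        rw [hFval] at hIC
        exact hIC
      -- let N → ∞
      have hmf : ∫ x, m x ∂μ ≤ ∫ x, f x ∂μ := by
        have htoReal : Tendsto (fun N => (μ ((E N)ᶜ)).toReal) atTop (nhds 0) := by
          have := (ENNReal.tendsto_toReal (by simp : (0 : ℝ≥0∞) ≠ ⊤)).comp hμE
          exact this
        have h5 : Tendsto (fun N => ∫ x, f x ∂μ + (μ ((E N)ᶜ)).toReal * (n : ℝ)) atTop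
            (nhds (∫ x, f x ∂μ)) := by
          have := tendsto_const_nhds (x := ∫ x, f x ∂μ) (f := atTop (α := ℕ))
          have h6 := this.add (htoReal.mul_const (n : ℝ))
          simpa using h6
        exact ge_of_tendsto h5 (Filter.Eventually.of_forall hNbound)
      -- conclude
      have hφm : ∀ x, φ x ≤ m x + ε := by
        intro x
        have h1 : φ x - ε ≤ m x := le_max_left _ _
        linarith
      calc ∫ x, φ x ∂μ ≤ ∫ x, (m x + ε) ∂μ :=
            integral_mono hφ_int (hm_int.add (integrable_const ε)) hφm
        _ = ∫ x, m x ∂μ + ε := by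
            rw [integral_add hm_int (integrable_const ε)]
            simp [measure_univ]
        _ ≤ ∫ x, f x ∂μ + ε := by linarith
    have hφf : ∫ x, φ x ∂μ ≤ ∫ x, f x ∂μ :=
      le_of_forall_pos_le_add fun ε hε => main2 ε hε
    calc ∫⁻ x, min (g x) (n : ℝ≥0∞) ∂μ
        = ∫⁻ x, ENNReal.ofReal (φ x) ∂μ := by
          refine lintegral_congr fun x => ?_
          rw [hφ_def]
          exact (ENNReal.ofReal_toReal (hmin_ne_top x)).symm
      _ = ENNReal.ofReal (∫ x, φ x ∂μ) :=
          (ofReal_integral_eq_lintegral_ofReal hφ_int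
            (Filter.Eventually.of_forall hφnonneg)).symm
      _ ≤ ENNReal.ofReal (∫ x, f x ∂μ) := ENNReal.ofReal_le_ofReal hφf
  -- monotone convergence in n
  have hgsup : ∀ x, g x = ⨆ n : ℕ, min (g x) (n : ℝ≥0∞) := by
    intro x
    rcases eq_or_ne (g x) ⊤ with h | h
    · rw [h]
      have h2 : ∀ n : ℕ, min (⊤ : ℝ≥0∞) (n : ℝ≥0∞) = (n : ℝ≥0∞) :=
        fun n => min_eq_right le_top
      simp only [h2]
      exact ENNReal.iSup_natCast.symm
    · refine le_antisymm ?_ (iSup_le fun n => min_le_left _ _)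
      obtain ⟨n, hn⟩ := ENNReal.exists_nat_gt h
      calc g x = min (g x) (n : ℝ≥0∞) := (min_eq_left hn.le).symm
        _ ≤ ⨆ n : ℕ, min (g x) (n : ℝ≥0∞) := le_iSup (fun n : ℕ => min (g x) (n : ℝ≥0∞)) n
  calc ∫⁻ x, g x ∂μ = ∫⁻ x, ⨆ n : ℕ, min (g x) (n : ℝ≥0∞) ∂μ :=
        lintegral_congr hgsup
    _ = ⨆ n : ℕ, ∫⁻ x, min (g x) (n : ℝ≥0∞) ∂μ :=
        lintegral_iSup (fun n => hg.min measurable_const)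
          (fun a b hab x => min_le_min le_rfl (by exact_mod_cast Nat.cast_le.mpr hab))
    _ ≤ ENNReal.ofReal (∫ x, f x ∂μ) := iSup_le main



/-- If `T` preserves the probability measure `μ` and `f ∈ L¹(μ)` is a.e. nonnegative,
then `limsup_{k→∞} A_k f`, a priori with values in `[0, ∞]`, is integrable and its
integral is at most `∫ f dμ`. -/
theorem limsup_birkhoffAverage_nonneg_le
    {X : Type*} [MeasurableSpace X] (μ : Measure X) [IsProbabilityMeasure μ]
    (T : X → X) (hT : MeasurePreserving T μ μ)
    (f : X → ℝ) (hf : Integrable f μ) (hf_nonneg : 0 ≤ᵐ[μ] f) :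
    ∫⁻ x, limsup (fun k => ENNReal.ofReal (birkhoffAverage ℝ T f k x)) atTop ∂μ ≠ ⊤ ∧
    ∫⁻ x, limsup (fun k => ENNReal.ofReal (birkhoffAverage ℝ T f k x)) atTop ∂μ
      ≤ ENNReal.ofReal (∫ x, f x ∂μ) := by
  set f₀ : X → ℝ := hf.1.mk f with hf₀_def
  have hf₀m : Measurable f₀ := hf.1.stronglyMeasurable_mk.measurable
  have hae : f =ᵐ[μ] f₀ := hf.1.ae_eq_mk
  have hf₀int : Integrable f₀ μ := hf.congr hae
  have hf₀nonneg : 0 ≤ᵐ[μ] f₀ := by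
    filter_upwards [hf_nonneg, hae] with x h1 h2
    rw [← h2]; exact h1
  have horb : ∀ᵐ x ∂μ, ∀ j : ℕ, f (T^[j] x) = f₀ (T^[j] x) := by
    rw [MeasureTheory.ae_all_iff]
    intro j
    exact (hT.iterate j).quasiMeasurePreserving.ae_eq hae
  have hlimsup_eq : ∀ᵐ x ∂μ,
      limsup (fun k => ENNReal.ofReal (birkhoffAverage ℝ T f k x)) atTop
        = limsup (fun k => ENNReal.ofReal (birkhoffAverage ℝ T f₀ k x)) atTop := by
    filter_upwards [horb] with x hx
    have : ∀ k : ℕ, birkhoffAverage ℝ T f k x = birkhoffAverage ℝ T f₀ k x := by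
      intro k
      unfold birkhoffAverage birkhoffSum
      congr 1
      exact Finset.sum_congr rfl fun i _ => hx i
    simp only [this]
  have hint_eq :
      ∫⁻ x, limsup (fun k => ENNReal.ofReal (birkhoffAverage ℝ T f k x)) atTop ∂μ
        = ∫⁻ x, limsup (fun k => ENNReal.ofReal (birkhoffAverage ℝ T f₀ k x)) atTop ∂μ :=
    lintegral_congr_ae hlimsup_eq
  have hintegral_eq : ∫ x, f x ∂μ = ∫ x, f₀ x ∂μ := integral_congr_ae hae
  have hkey := birkhoff_limsup_key μ T hT f₀ hf₀m hf₀int hf₀nonneg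
  constructor
  · rw [hint_eq]
    exact ne_top_of_le_ne_top ENNReal.ofReal_ne_top hkey
  · rw [hint_eq, hintegral_eq]
    exact hkey
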